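/- Let V be a finite index set, G a directed acyclic graph on V, and (X_v)_{v ∈ V} a family of random variables on a probability space, each taking values in a finite type, that satisfies the local Markov condition with respect to G. Then for every vertex v ∈ V and every subset S with PA_v ⊆ S ⊆ V \ {v} such that v is not an ancestor in G of any element of S, the conditional Shannon entropy satisfies H(X_v | (X_w)_{w ∈ S}) ≥ H(X_v | (X_w)_{w ∈ PA_v}); moreover this lower bound is attained (e.g. at S = PA_v), so that the minimum of H(X_v | (X_w)_{w ∈ S}) over all such sets S equals H(X_v | (X_w)_{w ∈ PA_v}). -/

import Mathlib

open MeasureTheory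

/-- Conditional Shannon entropy `H(X | Y)` of finitely-valued random variables:
`H(X | Y) = -∑_{x,y} P(X = x, Y = y) * log P(X = x | Y = y)`, with the convention
that terms with zero probability vanish (Lean's `log 0 = 0` and `a / 0 = 0`
conventions make this automatic). -/
noncomputable def condEntropy {Ω α β : Type*} [MeasurableSpace Ω] [Fintype α] [Fintype β]
    (μ : Measure Ω) (X : Ω → α) (Y : Ω → β) : ℝ :=
  -∑ x : α, ∑ y : β,
      (μ {ω | X ω = x ∧ Y ω = y}).toReal *
        Real.log ((μ {ω | X ω = x ∧ Y ω = y}).toReal / (μ {ω | Y ω = y}).toReal)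

/-- `X` and `W` are conditionally independent given `Z`:
for all values `x, w, z` with `P(Z = z) > 0`,
`P(X = x, W = w | Z = z) = P(X = x | Z = z) * P(W = w | Z = z)`. -/
def CondIndepFun {Ω α β γ : Type*} [MeasurableSpace Ω]
    (μ : Measure Ω) (X : Ω → α) (W : Ω → β) (Z : Ω → γ) : Prop :=
  ∀ (x : α) (w : β) (z : γ), 0 < (μ {ω | Z ω = z}).toReal →
    (μ {ω | X ω = x ∧ W ω = w ∧ Z ω = z}).toReal / (μ {ω | Z ω = z}).toReal =
      ((μ {ω | X ω = x ∧ Z ω = z}).toReal / (μ {ω | Z ω = z}).toReal) *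
        ((μ {ω | W ω = w ∧ Z ω = z}).toReal / (μ {ω | Z ω = z}).toReal)

private lemma p_fiber {Ω κ : Type*} [MeasurableSpace Ω] (μ : Measure Ω) [IsProbabilityMeasure μ]
    (T : Ω → κ) (hT : ∀ k, MeasurableSet {ω | T ω = k})
    (Q : Set Ω) (hQ : MeasurableSet Q) (t : Finset κ) :
    (μ (Q ∩ {ω | T ω ∈ t})).toReal = ∑ k ∈ t, (μ (Q ∩ {ω | T ω = k})).toReal := by
  have hU : Q ∩ {ω | T ω ∈ t} = ⋃ k ∈ t, Q ∩ {ω | T ω = k} := by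
    ext ω
    simp only [Set.mem_inter_iff, Set.mem_setOf_eq, Set.mem_iUnion]
    constructor
    · rintro ⟨hq, ht⟩; exact ⟨T ω, ht, hq, rfl⟩
    · rintro ⟨k, hk, hq, hT'⟩; exact ⟨hq, hT' ▸ hk⟩
  have hd : (↑t : Set κ).PairwiseDisjoint (fun k => Q ∩ {ω | T ω = k}) := by
    intro a _ b _ hab
    refine Set.disjoint_left.mpr fun ω ha hb => hab ?_
    rw [← ha.2, ← hb.2]
  rw [hU, measure_biUnion_finset hd (fun k _ => hQ.inter (hT k)),
    ENNReal.toReal_sum (fun k _ => measure_ne_top μ _)]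

private lemma lemmaM
    {Ω : Type*} [MeasurableSpace Ω] (μ : Measure Ω) [IsProbabilityMeasure μ]
    {V : Type*} [Fintype V] [DecidableEq V]
    (G : V → V → Prop) [DecidableRel G]
    {α : V → Type*} [∀ v, Fintype (α v)]
    (X : ∀ v, Ω → α v)
    (hXmeas : ∀ v (x : α v), MeasurableSet {ω | X v ω = x})
    (v : V)
    (hMv : CondIndepFun μ (X v)
        (fun ω => fun u : {u : V // u ≠ v ∧ ¬ Relation.TransGen G v u ∧ ¬ G u v} => X u.1 ω)
        (fun ω => fun u : {u : V // G u v} => X u.1 ω))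
    (S : Finset V) (hPA : ∀ u, G u v → u ∈ S) (hvS : v ∉ S)
    (hND : ∀ u ∈ S, ¬ Relation.TransGen G v u) :
    condEntropy μ (X v) (fun ω => fun u : S => X u.1 ω) =
      condEntropy μ (X v) (fun ω => fun u : {u : V // G u v} => X u.1 ω) := by
  classical
  set W : Ω → ((u : {u : V // u ≠ v ∧ ¬ Relation.TransGen G v u ∧ ¬ G u v}) → α u.1) :=
    fun ω => fun u => X u.1 ω with hW
  set Z : Ω → ((u : {u : V // G u v}) → α u.1) := fun ω => fun u => X u.1 ω with hZ
  set Y : Ω → ((u : S) → α u.1) := fun ω => fun u => X u.1 ω with hY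
  have hle : ∀ A B : Set Ω, A ⊆ B → (μ A).toReal ≤ (μ B).toReal :=
    fun A B h => ENNReal.toReal_mono (measure_ne_top μ B) (measure_mono h)
  -- restriction of an S-tuple to the parents
  set zres : ((u : S) → α u.1) → ((u : {u : V // G u v}) → α u.1) :=
    fun y u => y ⟨u.1, hPA u.1 u.2⟩ with hzres
  have hYZ : ∀ (ω : Ω) (y : (u : S) → α u.1), Y ω = y → Z ω = zres y := by
    intro ω y h
    funext u
    exact congrFun h ⟨u.1, hPA u.1 u.2⟩
  -- embedding of non-parent elements of S into the non-descendant subtype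
  set emb : (u : S) → ¬ G u.1 v → {u : V // u ≠ v ∧ ¬ Relation.TransGen G v u ∧ ¬ G u v} :=
    fun u h => ⟨u.1, fun e => hvS (e ▸ u.2), hND u.1 u.2, h⟩ with hemb
  set A : ((u : S) → α u.1) → Finset ((u : {u : V // u ≠ v ∧ ¬ Relation.TransGen G v u ∧ ¬ G u v}) → α u.1) :=
    fun y => Finset.univ.filter (fun w => ∀ (u : S) (h : ¬ G u.1 v), w (emb u h) = y u) with hA
  -- measurability of tuple level sets
  have hmeasY : ∀ y, MeasurableSet {ω | Y ω = y} := by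
    intro y
    have : {ω | Y ω = y} = ⋂ u : S, {ω | X u.1 ω = y u} := by
      ext ω
      simp only [Set.mem_setOf_eq, Set.mem_iInter, funext_iff]
      exact Iff.rfl
    rw [this]
    exact MeasurableSet.iInter fun u => hXmeas u.1 (y u)
  have hmeasZ : ∀ z, MeasurableSet {ω | Z ω = z} := by
    intro z
    have : {ω | Z ω = z} = ⋂ u : {u : V // G u v}, {ω | X u.1 ω = z u} := by
      ext ω
      simp only [Set.mem_setOf_eq, Set.mem_iInter, funext_iff]
      exact Iff.rfl
    rw [this]
    exact MeasurableSet.iInter fun u => hXmeas u.1 (z u)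
  have hmeasW : ∀ w, MeasurableSet {ω | W ω = w} := by
    intro w
    have : {ω | W ω = w}
        = ⋂ u : {u : V // u ≠ v ∧ ¬ Relation.TransGen G v u ∧ ¬ G u v}, {ω | X u.1 ω = w u} := by
      ext ω
      simp only [Set.mem_setOf_eq, Set.mem_iInter, funext_iff]
      exact Iff.rfl
    rw [this]
    exact MeasurableSet.iInter fun u => hXmeas u.1 (w u)
  -- decomposition of {Y = y} over compatible non-descendant tuples
  have hsum1 : ∀ (Q : Ω → Prop), MeasurableSet {ω | Q ω} → ∀ y,
      (μ {ω | Q ω ∧ Y ω = y}).toReal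
        = ∑ w ∈ A y, (μ {ω | Q ω ∧ W ω = w ∧ Z ω = zres y}).toReal := by
    intro Q hQ y
    have e1 : {ω | Q ω ∧ Y ω = y}
        = ({ω | Q ω} ∩ {ω | Z ω = zres y}) ∩ {ω | W ω ∈ A y} := by
      ext ω
      simp only [Set.mem_setOf_eq, Set.mem_inter_iff]
      constructor
      · rintro ⟨hq, hy⟩
        refine ⟨⟨hq, hYZ ω y hy⟩, ?_⟩
        rw [hA]
        refine Finset.mem_filter.mpr ⟨Finset.mem_univ _, fun u h => ?_⟩
        exact congrFun hy u
      · rintro ⟨⟨hq, hz⟩, hw⟩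
        refine ⟨hq, ?_⟩
        funext u
        by_cases h : G u.1 v
        · exact congrFun hz ⟨u.1, h⟩
        · rw [hA, Finset.mem_filter] at hw
          exact hw.2 u h
    rw [e1, p_fiber μ W hmeasW _ (hQ.inter (hmeasZ _)) (A y)]
    refine Finset.sum_congr rfl fun w _ => ?_
    have hset : ({ω | Q ω} ∩ {ω | Z ω = zres y}) ∩ {ω | W ω = w}
        = {ω | Q ω ∧ W ω = w ∧ Z ω = zres y} := by
      ext ω
      simp only [Set.mem_inter_iff, Set.mem_setOf_eq]
      tauto
    rw [hset]
  -- decomposition of {Z = z} over S-tuples restricting to z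
  have hsum3 : ∀ (Q : Ω → Prop), MeasurableSet {ω | Q ω} → ∀ z,
      (μ {ω | Q ω ∧ Z ω = z}).toReal
        = ∑ y ∈ Finset.univ.filter (fun y => zres y = z), (μ {ω | Q ω ∧ Y ω = y}).toReal := by
    intro Q hQ z
    have e1 : {ω | Q ω ∧ Z ω = z}
        = {ω | Q ω} ∩ {ω | Y ω ∈ Finset.univ.filter (fun y => zres y = z)} := by
      ext ω
      simp only [Set.mem_setOf_eq, Set.mem_inter_iff, Finset.mem_filter, Finset.mem_univ,
        true_and]
      exact Iff.rfl
    rw [e1, p_fiber μ Y hmeasY _ hQ _]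
    exact Finset.sum_congr rfl fun y _ => rfl
  -- multiplicative form of the Markov hypothesis
  have hMv' : ∀ x w z, (μ {ω | Z ω = z}).toReal ≠ 0 →
      (μ {ω | X v ω = x ∧ W ω = w ∧ Z ω = z}).toReal * (μ {ω | Z ω = z}).toReal =
        (μ {ω | X v ω = x ∧ Z ω = z}).toReal * (μ {ω | W ω = w ∧ Z ω = z}).toReal := by
    intro x w z hz
    have h0 : 0 < (μ {ω | Z ω = z}).toReal :=
      lt_of_le_of_ne ENNReal.toReal_nonneg (Ne.symm hz)
    have h := hMv x w z h0
    refine mul_right_cancel₀ hz ?_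
    rw [div_mul_div_comm, div_eq_div_iff hz (mul_ne_zero hz hz)] at h
    linear_combination h
  -- key product identity
  have hprod : ∀ (x : α v) (y : (u : S) → α u.1),
      (μ {ω | X v ω = x ∧ Y ω = y}).toReal * (μ {ω | Z ω = zres y}).toReal
        = (μ {ω | X v ω = x ∧ Z ω = zres y}).toReal * (μ {ω | Y ω = y}).toReal := by
    intro x y
    by_cases hz : (μ {ω | Z ω = zres y}).toReal = 0
    · have hxz : (μ {ω | X v ω = x ∧ Z ω = zres y}).toReal = 0 := by
        have := hle {ω | X v ω = x ∧ Z ω = zres y} {ω | Z ω = zres y} (fun ω h => h.2)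
        have h0 := ENNReal.toReal_nonneg (a := μ {ω | X v ω = x ∧ Z ω = zres y})
        linarith
      rw [hz, hxz]; ring
    · have e1 := hsum1 (fun ω => X v ω = x) (hXmeas v x) y
      have e2 := hsum1 (fun _ => True) MeasurableSet.univ y
      simp only [true_and] at e2
      have e2' : (μ {ω | Y ω = y}).toReal
          = ∑ w ∈ A y, (μ {ω | W ω = w ∧ Z ω = zres y}).toReal := e2
      rw [e1, e2', Finset.sum_mul, Finset.mul_sum]
      exact Finset.sum_congr rfl fun w _ => hMv' x w (zres y) hz
  -- conditional probabilities agree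
  have hcond : ∀ (x : α v) (y : (u : S) → α u.1),
      (μ {ω | X v ω = x ∧ Y ω = y}).toReal ≠ 0 →
      (μ {ω | X v ω = x ∧ Y ω = y}).toReal / (μ {ω | Y ω = y}).toReal
        = (μ {ω | X v ω = x ∧ Z ω = zres y}).toReal / (μ {ω | Z ω = zres y}).toReal := by
    intro x y hxy
    have h0 := ENNReal.toReal_nonneg (a := μ {ω | X v ω = x ∧ Y ω = y})
    have hy : (μ {ω | Y ω = y}).toReal ≠ 0 := by
      intro h
      have := hle {ω | X v ω = x ∧ Y ω = y} {ω | Y ω = y} (fun ω h => h.2)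
      exact hxy (le_antisymm (by linarith) h0)
    have hz : (μ {ω | Z ω = zres y}).toReal ≠ 0 := by
      intro h
      have := hle {ω | X v ω = x ∧ Y ω = y} {ω | Z ω = zres y}
        (fun ω hh => hYZ ω y hh.2)
      exact hxy (le_antisymm (by linarith) h0)
    rw [div_eq_div_iff hy hz]
    exact hprod x y
  -- now compute the entropies
  unfold condEntropy
  rw [neg_inj]
  refine Finset.sum_congr rfl fun x _ => ?_
  have step1 : ∀ y : (u : S) → α u.1,
      (μ {ω | X v ω = x ∧ Y ω = y}).toReal *
          Real.log ((μ {ω | X v ω = x ∧ Y ω = y}).toReal / (μ {ω | Y ω = y}).toReal)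
        = (μ {ω | X v ω = x ∧ Y ω = y}).toReal *
          Real.log ((μ {ω | X v ω = x ∧ Z ω = zres y}).toReal / (μ {ω | Z ω = zres y}).toReal) := by
    intro y
    by_cases h0 : (μ {ω | X v ω = x ∧ Y ω = y}).toReal = 0
    · rw [h0]; ring
    · rw [hcond x y h0]
  calc
    ∑ y : (u : S) → α u.1,
        (μ {ω | X v ω = x ∧ Y ω = y}).toReal *
          Real.log ((μ {ω | X v ω = x ∧ Y ω = y}).toReal / (μ {ω | Y ω = y}).toReal)
      = ∑ y : (u : S) → α u.1,
        (μ {ω | X v ω = x ∧ Y ω = y}).toReal *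
          Real.log ((μ {ω | X v ω = x ∧ Z ω = zres y}).toReal / (μ {ω | Z ω = zres y}).toReal) :=
      Finset.sum_congr rfl fun y _ => step1 y
    _ = ∑ z : (u : {u : V // G u v}) → α u.1,
          ∑ y ∈ Finset.univ.filter (fun y => zres y = z),
            (μ {ω | X v ω = x ∧ Y ω = y}).toReal *
              Real.log ((μ {ω | X v ω = x ∧ Z ω = zres y}).toReal / (μ {ω | Z ω = zres y}).toReal) :=
      (Finset.sum_fiberwise_of_maps_to (fun y _ => Finset.mem_univ (zres y)) _).symm
    _ = ∑ z : (u : {u : V // G u v}) → α u.1,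
          (μ {ω | X v ω = x ∧ Z ω = z}).toReal *
            Real.log ((μ {ω | X v ω = x ∧ Z ω = z}).toReal / (μ {ω | Z ω = z}).toReal) := by
      refine Finset.sum_congr rfl fun z _ => ?_
      have : ∑ y ∈ Finset.univ.filter (fun y => zres y = z),
            (μ {ω | X v ω = x ∧ Y ω = y}).toReal *
              Real.log ((μ {ω | X v ω = x ∧ Z ω = zres y}).toReal / (μ {ω | Z ω = zres y}).toReal)
          = ∑ y ∈ Finset.univ.filter (fun y => zres y = z),
            (μ {ω | X v ω = x ∧ Y ω = y}).toReal *
              Real.log ((μ {ω | X v ω = x ∧ Z ω = z}).toReal / (μ {ω | Z ω = z}).toReal) := by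
        refine Finset.sum_congr rfl fun y hy => ?_
        rw [(Finset.mem_filter.mp hy).2]
      rw [this, ← Finset.sum_mul, ← hsum3 (fun ω => X v ω = x) (hXmeas v x) z]

theorem condEntropy_parents_is_min
    {Ω : Type*} [MeasurableSpace Ω] (μ : Measure Ω) [IsProbabilityMeasure μ]
    {V : Type*} [Fintype V] [DecidableEq V]
    (G : V → V → Prop) [DecidableRel G]
    (hirrefl : ∀ v, ¬ G v v)
    (hacyclic : ∀ v, ¬ Relation.TransGen G v v)
    {α : V → Type*} [∀ v, Fintype (α v)]
    (X : ∀ v, Ω → α v)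
    (hXmeas : ∀ v (x : α v), MeasurableSet {ω | X v ω = x})
    (hMarkov : ∀ v : V,
      CondIndepFun μ (X v)
        (fun ω => fun u : {u : V // u ≠ v ∧ ¬ Relation.TransGen G v u ∧ ¬ G u v} =>
          X u.1 ω)
        (fun ω => fun u : {u : V // G u v} => X u.1 ω))
    (v : V) :
    (∀ S : Finset V,
        (∀ u, G u v → u ∈ S) → v ∉ S → (∀ u ∈ S, ¬ Relation.TransGen G v u) →
        condEntropy μ (X v) (fun ω => fun u : {u : V // G u v} => X u.1 ω) ≤
          condEntropy μ (X v) (fun ω => fun u : S => X u.1 ω)) ∧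
      (∃ S : Finset V,
        (∀ u, G u v → u ∈ S) ∧ v ∉ S ∧ (∀ u ∈ S, ¬ Relation.TransGen G v u) ∧
        condEntropy μ (X v) (fun ω => fun u : S => X u.1 ω) =
          condEntropy μ (X v) (fun ω => fun u : {u : V // G u v} => X u.1 ω)) := by
  constructor
  · intro S h1 h2 h3
    exact (lemmaM μ G X hXmeas v (hMarkov v) S h1 h2 h3).ge
  · refine ⟨Finset.univ.filter (fun u => G u v), fun u h => Finset.mem_filter.mpr ⟨Finset.mem_univ _, h⟩,
      fun h => hirrefl v (Finset.mem_filter.mp h).2,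
      fun u hu ht => hacyclic v (ht.tail (Finset.mem_filter.mp hu).2), ?_⟩
    exact lemmaM μ G X hXmeas v (hMarkov v) _
      (fun u h => Finset.mem_filter.mpr ⟨Finset.mem_univ _, h⟩)
      (fun h => hirrefl v (Finset.mem_filter.mp h).2)
      (fun u hu ht => hacyclic v (ht.tail (Finset.mem_filter.mp hu).2))
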